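/- Given n ≥ 1 pairwise distinct algebraic numbers α₁, …, αₙ ∈ ℂ, the set of integers t ∈ ℤ for which the translated numbers α₁ + t, …, αₙ + t are all nonzero and multiplicatively dependent is finite. -/

import Mathlib

open UniqueFactorizationMonoid in
private lemma nf_finset_prod {M : Type*} [CommMonoidWithZero M] [IsCancelMulZero M] [Nontrivial M]
    [UniqueFactorizationMonoid M] [NormalizationMonoid M] {ι : Type*} (s : Finset ι) (J : ι → M)
    (h : ∀ i ∈ s, J i ≠ 0) :
    normalizedFactors (∏ i ∈ s, J i) = ∑ i ∈ s, normalizedFactors (J i) := by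
  classical
  induction s using Finset.cons_induction with
  | empty => simp
  | cons a s ha ih =>
    rw [Finset.prod_cons, Finset.sum_cons,
      normalizedFactors_mul (h a (Finset.mem_cons_self a s))
        (Finset.prod_ne_zero_iff.mpr fun i hi => h i (Finset.mem_cons_of_mem hi)),
      ih fun i hi => h i (Finset.mem_cons_of_mem hi)]

open UniqueFactorizationMonoid in
private lemma pow_dvd_of_le_count {M : Type*} [CommMonoidWithZero M] [IsCancelMulZero M]
    [UniqueFactorizationMonoid M] [NormalizationMonoid M] [DecidableEq M] {Q I : M} (hI : I ≠ 0)
    {m : ℕ} (hm : m ≤ Multiset.count Q (normalizedFactors I)) : Q ^ m ∣ I := by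
  have h1 : Multiset.replicate m Q ≤ normalizedFactors I :=
    Multiset.le_count_iff_replicate_le.mp hm
  have h2 : (Multiset.replicate m Q).prod ∣ (normalizedFactors I).prod :=
    Multiset.prod_dvd_prod_of_le h1
  rw [Multiset.prod_replicate] at h2
  exact h2.trans (prod_normalizedFactors hI).dvd

open UniqueFactorizationMonoid in
private lemma le_count_of_pow_dvd {M : Type*} [CommMonoidWithZero M] [IsCancelMulZero M]
    [UniqueFactorizationMonoid M] [NormalizationMonoid M] [DecidableEq M] {Q I : M}
    (hQ : Irreducible Q) (hQn : normalize Q = Q) (hI : I ≠ 0) {m : ℕ} (h : Q ^ m ∣ I) :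
    m ≤ Multiset.count Q (normalizedFactors I) := by
  have h1 := (dvd_iff_normalizedFactors_le_normalizedFactors (pow_ne_zero m hQ.ne_zero) hI).mp h
  have hc := Multiset.count_le_of_le Q h1
  rwa [normalizedFactors_pow, normalizedFactors_irreducible hQ, hQn, Multiset.count_nsmul,
    Multiset.count_singleton_self, mul_one] at hc

private lemma prod_zpow_eq {G : Type*} [CommGroup G] {ι : Type*} (s : Finset ι) (a : G)
    (f : ι → ℤ) : ∏ i ∈ s, a ^ f i = a ^ (∑ i ∈ s, f i) := by
  classical
  induction s using Finset.cons_induction with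
  | empty => simp
  | cons b s hb ih => rw [Finset.prod_cons, Finset.sum_cons, ih, ← zpow_add]

private lemma units_relation {G : Type*} [CommGroup G] {n : ℕ} (v : Fin n → G) (u : G)
    (k : Fin n → ℤ) (h : ∏ i, v i ^ k i = u ^ (∑ i, k i)) :
    (∏ i, v i ^ (k i).toNat) * u ^ (-(∑ i, k i)).toNat
      = (∏ i, v i ^ (-(k i)).toNat) * u ^ (∑ i, k i).toNat := by
  have key : ∀ (g : G) (m : ℤ), g ^ m.toNat = g ^ m * g ^ (-m).toNat := fun g m => by
    rw [← zpow_natCast, ← zpow_natCast (n := (-m).toNat), ← zpow_add]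
    congr 1
    omega
  calc (∏ i, v i ^ (k i).toNat) * u ^ (-(∑ i, k i)).toNat
      = (∏ i, v i ^ k i * v i ^ (-(k i)).toNat) * u ^ (-(∑ i, k i)).toNat := by
        rw [Finset.prod_congr rfl fun i _ => key (v i) (k i)]
    _ = ((∏ i, v i ^ k i) * ∏ i, v i ^ (-(k i)).toNat) * u ^ (-(∑ i, k i)).toNat := by
        rw [Finset.prod_mul_distrib]
    _ = (∏ i, v i ^ (-(k i)).toNat) * (u ^ (∑ i, k i) * u ^ (-(∑ i, k i)).toNat) := by
        rw [h, mul_comm (u ^ ∑ i, k i) (∏ i, v i ^ (-(k i)).toNat), mul_assoc]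
    _ = (∏ i, v i ^ (-(k i)).toNat) * u ^ (∑ i, k i).toNat := by rw [← key]

private lemma prod_zpow₀ {K : Type*} [CommGroupWithZero K] {ι : Type*} (s : Finset ι) {a : K}
    (ha : a ≠ 0) (f : ι → ℤ) : ∏ i ∈ s, a ^ f i = a ^ (∑ i ∈ s, f i) := by
  classical
  induction s using Finset.cons_induction with
  | empty => simp
  | cons b s hb ih => rw [Finset.prod_cons, Finset.sum_cons, ih, ← zpow_add₀ ha]

private lemma field_relation {K : Type*} [Field K] {n : ℕ} (v : Fin n → K) (u : K)
    (hv : ∀ i, v i ≠ 0) (hu : u ≠ 0) (k : Fin n → ℤ)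
    (h : ∏ i, v i ^ k i = u ^ (∑ i, k i)) :
    (∏ i, v i ^ (k i).toNat) * u ^ (-(∑ i, k i)).toNat
      = (∏ i, v i ^ (-(k i)).toNat) * u ^ (∑ i, k i).toNat := by
  have key : ∀ (g : K), g ≠ 0 → ∀ m : ℤ, g ^ m.toNat = g ^ m * g ^ (-m).toNat := by
    intro g hg m
    rw [← zpow_natCast g m.toNat, ← zpow_natCast g (-m).toNat, ← zpow_add₀ hg]
    congr 1
    omega
  calc (∏ i, v i ^ (k i).toNat) * u ^ (-(∑ i, k i)).toNat
      = (∏ i, v i ^ k i * v i ^ (-(k i)).toNat) * u ^ (-(∑ i, k i)).toNat := by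
        rw [Finset.prod_congr rfl fun i _ => key (v i) (hv i) (k i)]
    _ = ((∏ i, v i ^ k i) * ∏ i, v i ^ (-(k i)).toNat) * u ^ (-(∑ i, k i)).toNat := by
        rw [Finset.prod_mul_distrib]
    _ = (∏ i, v i ^ (-(k i)).toNat) * (u ^ (∑ i, k i) * u ^ (-(∑ i, k i)).toNat) := by
        rw [h, mul_comm (u ^ ∑ i, k i) (∏ i, v i ^ (-(k i)).toNat), mul_assoc]
    _ = (∏ i, v i ^ (-(k i)).toNat) * u ^ (∑ i, k i).toNat := by rw [← key u hu]

open UniqueFactorizationMonoid in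
private lemma count_nf_side {R : Type*} [CommRing R] [IsDomain R] [IsDedekindDomain R]
    [DecidableEq (Ideal R)] {n : ℕ} (x : Fin n → R) (hx : ∀ i, x i ≠ 0) (d : R) (hd : d ≠ 0)
    (a : Fin n → ℕ) (c : ℕ) (Q : Ideal R) :
    Multiset.count Q (normalizedFactors (Ideal.span {(∏ i, x i ^ a i) * d ^ c})) =
      (∑ i, a i * Multiset.count Q (normalizedFactors (Ideal.span {x i}))) +
        c * Multiset.count Q (normalizedFactors (Ideal.span {d})) := by
  have hs : ∀ z : R, z ≠ 0 → (Ideal.span {z} : Ideal R) ≠ 0 := fun z hz => by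
    simpa [Ideal.zero_eq_bot, Ne, Ideal.span_singleton_eq_bot] using hz
  have key : (Ideal.span {(∏ i, x i ^ a i) * d ^ c} : Ideal R) =
      (∏ i, Ideal.span {x i} ^ a i) * Ideal.span {d} ^ c := by
    rw [show (∏ i, Ideal.span {x i} ^ a i : Ideal R) = ∏ i, Ideal.span {x i ^ a i} from
        Finset.prod_congr rfl fun i _ => Ideal.span_singleton_pow _ _,
      Ideal.prod_span_singleton, Ideal.span_singleton_pow,
      Ideal.span_singleton_mul_span_singleton]
  rw [key, normalizedFactors_mul
      (Finset.prod_ne_zero_iff.mpr fun i _ => pow_ne_zero _ (hs _ (hx i)))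
      (pow_ne_zero _ (hs _ hd)),
    nf_finset_prod _ _ (fun i _ => pow_ne_zero _ (hs _ (hx i))), normalizedFactors_pow,
    Multiset.count_add, Multiset.count_sum', Multiset.count_nsmul]
  congr 1
  exact Finset.sum_congr rfl fun i _ => by rw [normalizedFactors_pow, Multiset.count_nsmul]

open UniqueFactorizationMonoid in
private lemma key_dvd {R : Type*} [CommRing R] [IsDomain R] [IsDedekindDomain R]
    {n : ℕ} (x : Fin n → R) (d P : R) (hx : ∀ i, x i ≠ 0) (hd : d ≠ 0) (hP : P ≠ 0)
    (k : Fin n → ℤ) (i0 : Fin n) (hk0 : k i0 ≠ 0) (hmax : ∀ j, |k j| ≤ |k i0|)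
    (hdiffdvd : ∀ j, j ≠ i0 → (x i0 - x j) ∣ P)
    (hrel : (∏ i, x i ^ (k i).toNat) * d ^ (-(∑ i, k i)).toNat
          = (∏ i, x i ^ (-(k i)).toNat) * d ^ (∑ i, k i).toNat) :
    x i0 ∣ (d * P) ^ n := by
  classical
  have hs : ∀ z : R, z ≠ 0 → (Ideal.span {z} : Ideal R) ≠ 0 := fun z hz => by
    simpa [Ideal.zero_eq_bot, Ne, Ideal.span_singleton_eq_bot] using hz
  set cnt : Ideal R → R → ℕ :=
    fun Q z => Multiset.count Q (normalizedFactors (Ideal.span {z})) with hcnt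
  -- the ℤ-linear relation between the counts, for every prime Q
  have hZ : ∀ Q : Ideal R, ∑ i, k i * (cnt Q (x i) : ℤ) = (∑ i, k i) * (cnt Q d : ℤ) := by
    intro Q
    simp only [hcnt]
    have h1 := count_nf_side x hx d hd (fun i => (k i).toNat) (-(∑ i, k i)).toNat Q
    have h2 := count_nf_side x hx d hd (fun i => (-(k i)).toNat) (∑ i, k i).toNat Q
    rw [hrel, h2] at h1
    have h3 := congrArg (fun m : ℕ => (m : ℤ)) h1
    push_cast at h3
    have e1 : ∀ i : Fin n, k i * (Multiset.count Q (normalizedFactors (Ideal.span {x i})) : ℤ)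
        = ((k i).toNat : ℤ) * (Multiset.count Q (normalizedFactors (Ideal.span {x i})) : ℤ)
          - ((-(k i)).toNat : ℤ)
            * (Multiset.count Q (normalizedFactors (Ideal.span {x i})) : ℤ) := by
      intro i
      have h4 : ((k i).toNat : ℤ) - ((-(k i)).toNat : ℤ) = k i := by omega
      linear_combination (Multiset.count Q (normalizedFactors (Ideal.span {x i})) : ℤ) * h4.symm
    have e2 : ((∑ i, k i).toNat : ℤ) - ((-(∑ i, k i)).toNat : ℤ) = ∑ i, k i := by omega
    calc ∑ i, k i * (Multiset.count Q (normalizedFactors (Ideal.span {x i})) : ℤ)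
        = (∑ i, ((k i).toNat : ℤ) * (Multiset.count Q (normalizedFactors (Ideal.span {x i})) : ℤ))
          - ∑ i, ((-(k i)).toNat : ℤ)
              * (Multiset.count Q (normalizedFactors (Ideal.span {x i})) : ℤ) := by
          rw [← Finset.sum_sub_distrib]; exact Finset.sum_congr rfl fun i _ => e1 i
      _ = (∑ i, k i) * (Multiset.count Q (normalizedFactors (Ideal.span {d})) : ℤ) := by
          linear_combination (-1 : ℤ) * h3
            + (Multiset.count Q (normalizedFactors (Ideal.span {d})) : ℤ) * e2
  -- the count bound for every Q
  have hmain : ∀ Q : Ideal R, cnt Q (x i0) ≤ cnt Q ((d * P) ^ n) := by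
    intro Q
    by_cases hQmem : Q ∈ normalizedFactors (Ideal.span {x i0})
    swap
    · simp [hcnt, Multiset.count_eq_zero_of_notMem hQmem]
    have hQirr : Irreducible Q := irreducible_of_normalized_factor Q hQmem
    have hQn : normalize Q = Q := normalize_normalized_factor Q hQmem
    -- min of two counts is at most count of P
    have hminle : ∀ j, j ≠ i0 → min (cnt Q (x i0)) (cnt Q (x j)) ≤ cnt Q P := by
      intro j hj
      set m := min (cnt Q (x i0)) (cnt Q (x j)) with hm
      have hd1 : Q ^ m ∣ Ideal.span {x i0} :=
        pow_dvd_of_le_count (hs _ (hx i0)) (min_le_left _ _)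
      have hd2 : Q ^ m ∣ Ideal.span {x j} :=
        pow_dvd_of_le_count (hs _ (hx j)) (min_le_right _ _)
      have hm1 : x i0 ∈ Q ^ m := (Ideal.span_singleton_le_iff_mem _).mp (Ideal.le_of_dvd hd1)
      have hm2 : x j ∈ Q ^ m := (Ideal.span_singleton_le_iff_mem _).mp (Ideal.le_of_dvd hd2)
      have hsub : Q ^ m ∣ Ideal.span {x i0 - x j} :=
        Ideal.dvd_span_singleton.mpr (sub_mem hm1 hm2)
      have hPdvd : Ideal.span {x i0 - x j} ∣ Ideal.span {P} := by
        rw [Ideal.dvd_iff_le]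
        exact Ideal.span_singleton_le_span_singleton.mpr (hdiffdvd j hj)
      exact le_count_of_pow_dvd hQirr hQn (hs _ hP) (hsub.trans hPdvd)
    have hn1 : 0 < n := i0.pos
    have htarget : cnt Q ((d * P) ^ n) = n * (cnt Q d + cnt Q P) := by
      have h1 : (Ideal.span {(d * P) ^ n} : Ideal R) = (Ideal.span {d} * Ideal.span {P}) ^ n := by
        rw [Ideal.span_singleton_mul_span_singleton, Ideal.span_singleton_pow]
      simp only [hcnt, h1, normalizedFactors_pow,
        normalizedFactors_mul (hs _ hd) (hs _ hP), Multiset.count_nsmul, Multiset.count_add]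
    rw [htarget]
    by_cases hcase : ∀ j, j ≠ i0 → cnt Q (x j) < cnt Q (x i0)
    · -- dominant case: use the linear relation
      have hejπ : ∀ j, j ≠ i0 → cnt Q (x j) ≤ cnt Q P := fun j hj => by
        have := hminle j hj
        rwa [min_eq_right (le_of_lt (hcase j hj))] at this
      have hZQ := hZ Q
      have hsplit : k i0 * (cnt Q (x i0) : ℤ)
          = (∑ i, k i) * (cnt Q d : ℤ) - ∑ j ∈ Finset.univ.erase i0, k j * (cnt Q (x j) : ℤ) := by
        rw [← hZQ, ← Finset.add_sum_erase _ _ (Finset.mem_univ i0)]; ring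
      have habs : |k i0| * (cnt Q (x i0) : ℤ)
          ≤ |∑ i, k i| * (cnt Q d : ℤ)
            + ∑ j ∈ Finset.univ.erase i0, |k j| * (cnt Q (x j) : ℤ) := by
        have h0 : |k i0| * (cnt Q (x i0) : ℤ) = |k i0 * (cnt Q (x i0) : ℤ)| := by
          rw [abs_mul, abs_of_nonneg (Int.natCast_nonneg _)]
        rw [h0, hsplit]
        refine (abs_sub _ _).trans ?_
        gcongr
        · rw [abs_mul, abs_of_nonneg (Int.natCast_nonneg _)]
        · refine (Finset.abs_sum_le_sum_abs _ _).trans ?_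
          refine Finset.sum_le_sum fun j _ => ?_
          rw [abs_mul, abs_of_nonneg (Int.natCast_nonneg _)]
      have hsum1 : |∑ i, k i| ≤ (n : ℤ) * |k i0| := by
        refine (Finset.abs_sum_le_sum_abs _ _).trans ?_
        calc ∑ i, |k i| ≤ ∑ _i : Fin n, |k i0| := Finset.sum_le_sum fun i _ => hmax i
          _ = (n : ℤ) * |k i0| := by
            rw [Finset.sum_const, Finset.card_univ, Fintype.card_fin, nsmul_eq_mul]
      have hsum2 : ∑ j ∈ Finset.univ.erase i0, |k j| * (cnt Q (x j) : ℤ)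
          ≤ (n : ℤ) * (|k i0| * (cnt Q P : ℤ)) := by
        calc ∑ j ∈ Finset.univ.erase i0, |k j| * (cnt Q (x j) : ℤ)
            ≤ ∑ _j ∈ Finset.univ.erase i0, |k i0| * (cnt Q P : ℤ) := by
              refine Finset.sum_le_sum fun j hj => ?_
              have hj' : j ≠ i0 := Finset.ne_of_mem_erase hj
              have hc := hejπ j hj'
              exact mul_le_mul (hmax j) (by exact_mod_cast hc) (Int.natCast_nonneg _)
                (abs_nonneg _)
          _ ≤ (n : ℤ) * (|k i0| * (cnt Q P : ℤ)) := by
              rw [Finset.sum_const, nsmul_eq_mul]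
              refine mul_le_mul_of_nonneg_right ?_ (by positivity)
              have hcard : (Finset.univ.erase i0).card ≤ n := by
                refine le_trans (le_of_eq (Finset.card_erase_of_mem (Finset.mem_univ i0))) ?_
                simp [Finset.card_univ]
              exact_mod_cast hcard
      have hM : (0 : ℤ) < |k i0| := abs_pos.mpr hk0
      have hfinal : |k i0| * (cnt Q (x i0) : ℤ)
          ≤ |k i0| * ((n : ℤ) * ((cnt Q d : ℤ) + (cnt Q P : ℤ))) := by
        calc |k i0| * (cnt Q (x i0) : ℤ)
            ≤ |∑ i, k i| * (cnt Q d : ℤ)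
              + ∑ j ∈ Finset.univ.erase i0, |k j| * (cnt Q (x j) : ℤ) := habs
          _ ≤ (n : ℤ) * |k i0| * (cnt Q d : ℤ) + (n : ℤ) * (|k i0| * (cnt Q P : ℤ)) := by
              gcongr
          _ = |k i0| * ((n : ℤ) * ((cnt Q d : ℤ) + (cnt Q P : ℤ))) := by ring
      have := le_of_mul_le_mul_left hfinal hM
      exact_mod_cast this
    · -- some other index has at least the same count
      push_neg at hcase
      obtain ⟨j, hj, hle⟩ := hcase
      have : cnt Q (x i0) ≤ cnt Q P := by
        have := hminle j hj
        rwa [min_eq_left hle] at this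
      calc cnt Q (x i0) ≤ cnt Q P := this
        _ ≤ n * (cnt Q d + cnt Q P) := by
          calc cnt Q P ≤ n * cnt Q P := Nat.le_mul_of_pos_left _ hn1
            _ ≤ n * (cnt Q d + cnt Q P) := Nat.mul_le_mul_left _ (Nat.le_add_left _ _)
  -- conclude the divisibility
  have hmulset : normalizedFactors (Ideal.span {x i0})
      ≤ normalizedFactors (Ideal.span {(d * P) ^ n}) := Multiset.le_iff_count.mpr fun Q => hmain Q
  have hdvdI : Ideal.span {x i0} ∣ Ideal.span {(d * P) ^ n} :=
    (dvd_iff_normalizedFactors_le_normalizedFactors (hs _ (hx i0))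
      (hs _ (pow_ne_zero _ (mul_ne_zero hd hP)))).mpr hmulset
  exact Ideal.span_singleton_le_span_singleton.mp (Ideal.le_of_dvd hdvdI)

noncomputable def Complex.abs : AbsoluteValue ℂ ℝ := NormedField.toAbsoluteValue ℂ

theorem Complex.abs_ofReal (r : ℝ) : Complex.abs (r : ℂ) = |r| :=
  show ‖(r : ℂ)‖ = |r| by simp

theorem Complex.abs_intCast (m : ℤ) : Complex.abs (m : ℂ) = |(m : ℝ)| :=
  show ‖(m : ℂ)‖ = |(m : ℝ)| from Complex.norm_intCast m

noncomputable section
open NumberField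

private theorem main_aux {K : Type*} [Field K] [NumberField K]
    (n : ℕ) (hn : 1 ≤ n) (A : Fin n → K) (hAinj : Function.Injective A) :
    {t : ℤ | (∀ i, A i + (t : K) ≠ 0) ∧
        ∃ k : Fin n → ℤ, k ≠ 0 ∧ (∏ i, (A i + (t : K)) ^ k i) = 1}.Finite := by
  classical
  obtain ⟨y, hy, hint⟩ := exists_integral_multiples ℤ ℚ (L := K) (Finset.univ.image A)
  have hyK : (y : K) ≠ 0 := by exact_mod_cast hy
  have hyint : ∀ i, IsIntegral ℤ ((y : K) * A i) := fun i => by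
    have := hint (A i) (Finset.mem_image_of_mem A (Finset.mem_univ i))
    rwa [zsmul_eq_mul] at this
  set ξ : Fin n → 𝓞 K := fun i => ⟨(y : K) * A i, hyint i⟩ with hξ
  set dO : 𝓞 K := (y : 𝓞 K) with hdO
  have hdOK : ((dO : 𝓞 K) : K) = (y : K) := by
    rw [hdO, RingOfIntegers.coe_eq_algebraMap]
    exact map_intCast (algebraMap (𝓞 K) K) y
  have hdOne : dO ≠ 0 := by
    intro h
    rw [h] at hdOK
    exact hyK (by rw [← hdOK]; simp)
  set Pel : 𝓞 K := ∏ p ∈ Finset.univ.offDiag, (ξ p.1 - ξ p.2) with hPel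
  have hPelne : Pel ≠ 0 := by
    rw [hPel]
    refine Finset.prod_ne_zero_iff.mpr fun p hp => ?_
    have hpne : p.1 ≠ p.2 := (Finset.mem_offDiag.mp hp).2.2
    intro h
    have hξeq : ξ p.1 = ξ p.2 := sub_eq_zero.mp h
    have h2 : (y : K) * A p.1 = (y : K) * A p.2 := congrArg (fun z : 𝓞 K => (z : K)) hξeq
    exact hpne (hAinj (mul_left_cancel₀ hyK h2))
  -- embeddings
  haveI : Nonempty (K →ₐ[ℚ] ℂ) := by
    have : 0 < Module.finrank ℚ K := Module.finrank_pos
    exact ⟨IsAlgClosed.lift (M := ℂ)⟩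
  -- the norm-product formula
  have hnorm_prod : ∀ z : 𝓞 K,
      ∏ σ : K →ₐ[ℚ] ℂ, Complex.abs (σ (z : K)) = |((Algebra.norm ℤ z : ℤ) : ℝ)| := by
    intro z
    have h1 := Algebra.norm_eq_prod_embeddings ℚ ℂ (z : K)
    have h2 := congrArg Complex.abs h1
    rw [map_prod] at h2
    rw [← h2, ← Algebra.coe_norm_int]
    have h3 : ((algebraMap ℚ ℂ) ((Algebra.norm ℤ z : ℤ) : ℚ))
        = (((Algebra.norm ℤ z : ℤ) : ℝ) : ℂ) := by
      push_cast
      simp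
    rw [h3, Complex.abs_ofReal]
  -- constants
  set C : ℝ := ∑ i, ∑ σ : K →ₐ[ℚ] ℂ, Complex.abs (σ (A i)) with hC
  have hCbound : ∀ (i : Fin n) (σ : K →ₐ[ℚ] ℂ), Complex.abs (σ (A i)) ≤ C := by
    intro i σ
    rw [hC]
    calc Complex.abs (σ (A i)) ≤ ∑ σ' : K →ₐ[ℚ] ℂ, Complex.abs (σ' (A i)) :=
          Finset.single_le_sum (f := fun σ' : K →ₐ[ℚ] ℂ => Complex.abs (σ' (A i)))
            (fun _ _ => AbsoluteValue.nonneg _ _) (Finset.mem_univ σ)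
      _ ≤ ∑ i', ∑ σ' : K →ₐ[ℚ] ℂ, Complex.abs (σ' (A i')) :=
          Finset.single_le_sum (f := fun i' => ∑ σ' : K →ₐ[ℚ] ℂ, Complex.abs (σ' (A i')))
            (fun _ _ => Finset.sum_nonneg fun _ _ => AbsoluteValue.nonneg _ _)
            (Finset.mem_univ i)
  have hC0 : 0 ≤ C := by
    rw [hC]
    exact Finset.sum_nonneg fun _ _ => Finset.sum_nonneg fun _ _ => AbsoluteValue.nonneg _ _
  set Θ : 𝓞 K := (dO * Pel) ^ n with hΘ
  have hΘne : Θ ≠ 0 := pow_ne_zero _ (mul_ne_zero hdOne hPelne)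
  have hNΘ : Algebra.norm ℤ Θ ≠ 0 := by
    intro h
    have h2 : (Algebra.norm ℤ Θ : ℚ) = Algebra.norm ℚ ((Θ : 𝓞 K) : K) := Algebra.coe_norm_int Θ
    rw [h] at h2
    have h3 : Algebra.norm ℚ ((Θ : 𝓞 K) : K) ≠ 0 :=
      Algebra.norm_ne_zero_iff.mpr (RingOfIntegers.coe_ne_zero_iff.mpr hΘne)
    exact h3 (by exact_mod_cast h2.symm)
  set Γ : ℤ := |Algebra.norm ℤ Θ| with hΓ
  have hΓ0 : 0 < Γ := abs_pos.mpr hNΘ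
  set B : ℤ := ⌈C⌉ + Γ + 1 with hB
  -- finiteness
  refine Set.Finite.subset (Set.finite_Icc (-B) B) ?_
  rintro t ⟨hne, k, hkne, hKprod⟩
  -- the integral translates
  set x : Fin n → 𝓞 K := fun i => ξ i + dO * (t : 𝓞 K) with hx
  have htO : (((t : ℤ) : 𝓞 K) : K) = ((t : ℤ) : K) := by
    rw [RingOfIntegers.coe_eq_algebraMap]
    exact map_intCast (algebraMap (𝓞 K) K) t
  have hxK : ∀ i, ((x i : 𝓞 K) : K) = (y : K) * (A i + (t : K)) := by
    intro i
    have h1 : ((x i : 𝓞 K) : K)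
        = ((ξ i : 𝓞 K) : K) + ((dO : 𝓞 K) : K) * (((t : ℤ) : 𝓞 K) : K) := by
      rw [hx]
      simp only [RingOfIntegers.coe_eq_algebraMap, map_add, map_mul]
    rw [h1, hdOK, htO, show ((ξ i : 𝓞 K) : K) = (y : K) * A i from rfl]
    ring
  have hxne : ∀ i, x i ≠ 0 := by
    intro i h
    have h2 : ((x i : 𝓞 K) : K) = 0 := by rw [h]; simp
    rw [hxK i] at h2
    exact (mul_ne_zero hyK (hne i)) h2
  have hxKne : ∀ i, ((x i : 𝓞 K) : K) ≠ 0 := fun i => by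
    rw [hxK i]; exact mul_ne_zero hyK (hne i)
  -- the multiplicative relation for the integral translates, in K
  have hrelK : ∏ i, ((x i : 𝓞 K) : K) ^ k i = ((dO : 𝓞 K) : K) ^ (∑ i, k i) := by
    calc ∏ i, ((x i : 𝓞 K) : K) ^ k i
        = ∏ i, ((y : K) ^ k i * (A i + (t : K)) ^ k i) := by
          refine Finset.prod_congr rfl fun i _ => ?_
          rw [hxK i, mul_zpow]
      _ = (∏ i, (y : K) ^ k i) * ∏ i, (A i + (t : K)) ^ k i := Finset.prod_mul_distrib
      _ = (y : K) ^ (∑ i, k i) := by rw [prod_zpow₀ _ hyK, hKprod, mul_one]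
      _ = ((dO : 𝓞 K) : K) ^ (∑ i, k i) := by rw [hdOK]
  have hrelK2 := field_relation (fun i => ((x i : 𝓞 K) : K)) ((dO : 𝓞 K) : K) hxKne
    (by rw [hdOK]; exact hyK) k hrelK
  -- descend to the ring of integers
  have hOrel : (∏ i, x i ^ (k i).toNat) * dO ^ (-(∑ i, k i)).toNat
      = (∏ i, x i ^ (-(k i)).toNat) * dO ^ (∑ i, k i).toNat := by
    apply RingOfIntegers.coe_injective
    simp only [map_mul, map_prod, map_pow]
    exact hrelK2
  -- maximal exponent index
  haveI : Nonempty (Fin n) := ⟨⟨0, hn⟩⟩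
  obtain ⟨i0, -, hmax'⟩ := Finset.exists_max_image Finset.univ (fun j => |k j|)
    ⟨⟨0, hn⟩, Finset.mem_univ _⟩
  have hmax : ∀ j, |k j| ≤ |k i0| := fun j => hmax' j (Finset.mem_univ j)
  obtain ⟨j0, hj0⟩ := Function.ne_iff.mp hkne
  have hk0 : k i0 ≠ 0 := by
    intro h
    have := hmax j0
    rw [h] at this
    simp only [abs_zero] at this
    exact hj0 (abs_nonpos_iff.mp this ▸ rfl)
  -- differences divide Pel
  have hdiffdvd : ∀ j, j ≠ i0 → (x i0 - x j) ∣ Pel := by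
    intro j hj
    have hdiff : x i0 - x j = ξ i0 - ξ j := by
      rw [hx]
      ring
    rw [hdiff, hPel]
    exact Finset.dvd_prod_of_mem (fun p => ξ p.1 - ξ p.2)
      (show ((i0, j) : Fin n × Fin n) ∈ Finset.univ.offDiag from
        Finset.mem_offDiag.mpr ⟨Finset.mem_univ _, Finset.mem_univ _, Ne.symm hj⟩)
  -- the key divisibility
  have hdvd : x i0 ∣ Θ := by
    rw [hΘ]
    exact key_dvd x dO Pel hxne hdOne hPelne k i0 hk0 hmax hdiffdvd hOrel
  -- norm bound
  have hnormdvd : Algebra.norm ℤ (x i0) ∣ Algebra.norm ℤ Θ := map_dvd (Algebra.norm ℤ) hdvd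
  have hnormle : |Algebra.norm ℤ (x i0)| ≤ Γ := by
    rw [hΓ]
    exact Int.le_of_dvd (abs_pos.mpr hNΘ) ((abs_dvd _ _).mpr ((dvd_abs _ _).mpr hnormdvd))
  -- archimedean bound
  have hprodle : ∏ σ : K →ₐ[ℚ] ℂ, Complex.abs (σ ((x i0 : 𝓞 K) : K)) ≤ (Γ : ℝ) := by
    rw [hnorm_prod (x i0)]
    rw [← Int.cast_abs]
    exact_mod_cast hnormle
  -- conclude |t| is small
  by_contra htmem
  have htabs : B + 1 ≤ |t| := by
    rw [Set.mem_Icc] at htmem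
    rw [Int.abs_eq_natAbs]
    omega
  have htR : (C + (Γ : ℝ) + 1) ≤ |(t : ℝ)| := by
    have h1 : ((B : ℤ) : ℝ) + 1 ≤ |(t : ℝ)| := by
      rw [← Int.cast_abs]
      exact_mod_cast htabs
    have h2 : C ≤ (⌈C⌉ : ℝ) := Int.le_ceil C
    rw [hB] at h1
    push_cast at h1
    linarith
  have hfactor : ∀ σ : K →ₐ[ℚ] ℂ, (Γ : ℝ) + 1 ≤ Complex.abs (σ ((x i0 : 𝓞 K) : K)) := by
    intro σ
    have hσx : σ ((x i0 : 𝓞 K) : K) = ((y : ℤ) : ℂ) * (σ (A i0) + ((t : ℤ) : ℂ)) := by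
      rw [hxK i0, map_mul, map_add, map_intCast, map_intCast]
    rw [hσx, map_mul]
    have h1 : (1 : ℝ) ≤ Complex.abs (((y : ℤ) : ℂ)) := by
      rw [Complex.abs_intCast]
      exact_mod_cast Int.one_le_abs hy
    have h2 : (Γ : ℝ) + 1 ≤ Complex.abs (σ (A i0) + ((t : ℤ) : ℂ)) := by
      have h3 : Complex.abs (((t : ℤ) : ℂ)) - Complex.abs (σ (A i0))
          ≤ Complex.abs (σ (A i0) + ((t : ℤ) : ℂ)) := by
        have habs := Complex.abs.add_le (σ (A i0) + ((t : ℤ) : ℂ)) (-(σ (A i0)))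
        have he : (σ (A i0) + ((t : ℤ) : ℂ)) + (-(σ (A i0))) = ((t : ℤ) : ℂ) := by ring
        rw [he, AbsoluteValue.map_neg] at habs
        linarith
      have h4 : Complex.abs (((t : ℤ) : ℂ)) = |(t : ℝ)| := by
        push_cast [Complex.abs_intCast]
        rfl
      have h5 := hCbound i0 σ
      rw [h4] at h3
      linarith
    calc (Γ : ℝ) + 1 = 1 * ((Γ : ℝ) + 1) := by ring
      _ ≤ Complex.abs (((y : ℤ) : ℂ)) * Complex.abs (σ (A i0) + ((t : ℤ) : ℂ)) := by
        apply mul_le_mul h1 h2 (by positivity) (by positivity)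
  have hcard : 1 ≤ Fintype.card (K →ₐ[ℚ] ℂ) := Fintype.card_pos
  have hΓR : (0 : ℝ) ≤ (Γ : ℝ) := by exact_mod_cast hΓ0.le
  have hprodge : ((Γ : ℝ) + 1) ≤ ∏ σ : K →ₐ[ℚ] ℂ, Complex.abs (σ ((x i0 : 𝓞 K) : K)) := by
    calc ((Γ : ℝ) + 1) ≤ ((Γ : ℝ) + 1) ^ Fintype.card (K →ₐ[ℚ] ℂ) :=
          le_self_pow₀ (by linarith) (by omega)
      _ ≤ ∏ σ : K →ₐ[ℚ] ℂ, Complex.abs (σ ((x i0 : 𝓞 K) : K)) := by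
          rw [← Finset.card_univ, ← Finset.prod_const]
          exact Finset.prod_le_prod (fun _ _ => by positivity) (fun σ _ => hfactor σ)
  linarith

end

/-- The complex numbers `z 0, …, z (n-1)` (assumed nonzero) are multiplicatively
dependent: some nonzero integer vector `k` satisfies `∏ i, z i ^ k i = 1`. -/
def MultDep {n : ℕ} (z : Fin n → ℂ) : Prop :=
  ∃ k : Fin n → ℤ, k ≠ 0 ∧ (∏ i, z i ^ k i) = 1

theorem stmt3 (n : ℕ) (hn : 1 ≤ n) (α : Fin n → ℂ)
    (halg : ∀ i, IsAlgebraic ℚ (α i)) (hinj : Function.Injective α) :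
    {t : ℤ | (∀ i, α i + (t : ℂ) ≠ 0) ∧ MultDep (fun i => α i + (t : ℂ))}.Finite := by
  have hfin : (Set.range α).Finite := Set.finite_range α
  haveI : Finite (Set.range α) := hfin.to_subtype
  let K : IntermediateField ℚ ℂ := IntermediateField.adjoin ℚ (Set.range α)
  haveI : FiniteDimensional ℚ K :=
    IntermediateField.finiteDimensional_adjoin fun x hx => by
      obtain ⟨i, rfl⟩ := hx
      exact (halg i).isIntegral
  haveI : NumberField K := ⟨⟩
  let A : Fin n → K := fun i =>
    ⟨α i, IntermediateField.subset_adjoin ℚ (Set.range α) ⟨i, rfl⟩⟩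
  have hAinj : Function.Injective A := fun i j h => hinj (congrArg Subtype.val h)
  refine Set.Finite.subset (main_aux n hn A hAinj) ?_
  intro t ht
  obtain ⟨h0, k, hkne, hprod⟩ := ht
  have hcoe : ∀ i, ((A i + (t : ℤ) : K) : ℂ) = α i + (t : ℂ) := by
    intro i
    push_cast
    rfl
  have hne : ∀ i, A i + (t : K) ≠ 0 := by
    intro i h
    apply h0 i
    rw [← hcoe i, h]
    simp
  have hvalinj : Function.Injective (K.val : K →ₐ[ℚ] ℂ) := fun a b h => Subtype.ext h
  refine ⟨hne, k, hkne, ?_⟩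
  apply hvalinj
  rw [map_one, map_prod]
  calc ∏ i, (K.val) ((A i + (t : K)) ^ k i)
      = ∏ i, (α i + (t : ℂ)) ^ k i := by
        refine Finset.prod_congr rfl fun i _ => ?_
        rw [map_zpow₀, show (K.val) (A i + (t : K)) = α i + (t : ℂ) from hcoe i]
    _ = 1 := hprod
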